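/- For all n ≥ 1, the number of up-down permutations σ of length 2n+1 with mmp^{(1,0,0,0)}(σ) = n is exactly (2n)!! = 2·4·6⋯(2n), and moreover mmp^{(1,0,0,0)}(σ) ≥ n for every up-down permutation of length 2n+1. -/

import Mathlib

open Finset

/-- Number of indices `i` such that there exists `j > i` with `σ j > σ i`
    (the statistic mmp^{(1,0,0,0)}). -/
noncomputable def mmp1000 {n : ℕ} (σ : Equiv.Perm (Fin n)) : ℕ :=
  (Finset.univ.filter (fun i : Fin n => ∃ j : Fin n, i < j ∧ σ i < σ j)).card

/-- Number of indices `i` such that there exists `j < i` with `σ j > σ i`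
    (the statistic mmp^{(0,1,0,0)}). -/
noncomputable def mmp0100 {n : ℕ} (σ : Equiv.Perm (Fin n)) : ℕ :=
  (Finset.univ.filter (fun i : Fin n => ∃ j : Fin n, j < i ∧ σ i < σ j)).card

/-- Number of indices `i` such that there exists `j > i` with `σ j < σ i`
    (the statistic mmp^{(0,0,0,1)}). -/
noncomputable def mmp0001 {n : ℕ} (σ : Equiv.Perm (Fin n)) : ℕ :=
  (Finset.univ.filter (fun i : Fin n => ∃ j : Fin n, i < j ∧ σ j < σ i)).card

/-- σ is up-down: σ(1) < σ(2) > σ(3) < σ(4) > ⋯ (0-indexed: ascent at even indices). -/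
def IsUpDown {n : ℕ} (σ : Equiv.Perm (Fin n)) : Prop :=
  ∀ i : Fin n, ∀ h : (i : ℕ) + 1 < n,
    if (i : ℕ) % 2 = 0 then σ i < σ ⟨(i : ℕ) + 1, h⟩ else σ ⟨(i : ℕ) + 1, h⟩ < σ i

/-- σ is down-up: σ(1) > σ(2) < σ(3) > σ(4) < ⋯ (0-indexed: descent at even indices). -/
def IsDownUp {n : ℕ} (σ : Equiv.Perm (Fin n)) : Prop :=
  ∀ i : Fin n, ∀ h : (i : ℕ) + 1 < n,
    if (i : ℕ) % 2 = 0 then σ ⟨(i : ℕ) + 1, h⟩ < σ i else σ i < σ ⟨(i : ℕ) + 1, h⟩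

open scoped Classical in
/-- The set of up-down permutations of length `m`. -/
noncomputable def UDset (m : ℕ) : Finset (Equiv.Perm (Fin m)) :=
  Finset.univ.filter (fun σ => IsUpDown σ)

open scoped Classical in
/-- The set of down-up permutations of length `m`. -/
noncomputable def DUset (m : ℕ) : Finset (Equiv.Perm (Fin m)) :=
  Finset.univ.filter (fun σ => IsDownUp σ)

/-- The reverse of σ: σ^r(i) = σ(n+1-i). -/
def permReverse {n : ℕ} (σ : Equiv.Perm (Fin n)) : Equiv.Perm (Fin n) :=
  Fin.revPerm.trans σ

/-- The complement of σ: σ^c(i) = n+1-σ(i). -/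
def permComplement {n : ℕ} (σ : Equiv.Perm (Fin n)) : Equiv.Perm (Fin n) :=
  σ.trans Fin.revPerm

/-- A_{2n}(x) = Σ_{σ ∈ UD_{2n}} x^{mmp^{(1,0,0,0)}(σ)}. -/
noncomputable def Apoly (n : ℕ) (x : ℤ) : ℤ :=
  ∑ σ ∈ UDset (2 * n), x ^ mmp1000 σ

/-- B_{2n+1}(x) = Σ_{σ ∈ UD_{2n+1}} x^{mmp^{(1,0,0,0)}(σ)}. -/
noncomputable def Bpoly (n : ℕ) (x : ℤ) : ℤ :=
  ∑ σ ∈ UDset (2 * n + 1), x ^ mmp1000 σ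

/-- C_{2n}(x) = Σ_{σ ∈ DU_{2n}} x^{mmp^{(1,0,0,0)}(σ)}. -/
noncomputable def Cpoly (n : ℕ) (x : ℤ) : ℤ :=
  ∑ σ ∈ DUset (2 * n), x ^ mmp1000 σ

/-- D_{2n+1}(x) = Σ_{σ ∈ DU_{2n+1}} x^{mmp^{(1,0,0,0)}(σ)}. -/
noncomputable def Dpoly (n : ℕ) (x : ℤ) : ℤ :=
  ∑ σ ∈ DUset (2 * n + 1), x ^ mmp1000 σ

/-- Number of up-down permutations of length m. -/
noncomputable def udCount (m : ℕ) : ℕ := (UDset m).card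

/-- Number of down-up permutations of length m. -/
noncomputable def duCount (m : ℕ) : ℕ := (DUset m).card

open scoped Classical in
/-- |{σ ∈ UD_{2m} : mmp^{(1,0,0,0)}(σ) = c}|. -/
noncomputable def AcountEq (m c : ℕ) : ℕ :=
  ((UDset (2 * m)).filter (fun σ => mmp1000 σ = c)).card

open scoped Classical in
/-- |{σ ∈ DU_{2m+1} : mmp^{(1,0,0,0)}(σ) = c}|. -/
noncomputable def DcountEq (m c : ℕ) : ℕ :=
  ((DUset (2 * m + 1)).filter (fun σ => mmp1000 σ = c)).card

open scoped Classical in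
/-- |{σ ∈ UD_{2m+1} : mmp^{(1,0,0,0)}(σ) = c}|. -/
noncomputable def BcountEq (m c : ℕ) : ℕ :=
  ((UDset (2 * m + 1)).filter (fun σ => mmp1000 σ = c)).card

open scoped Classical in
/-- |{σ ∈ DU_{2m} : mmp^{(1,0,0,0)}(σ) = c}|. -/
noncomputable def CcountEq (m c : ℕ) : ℕ :=
  ((DUset (2 * m)).filter (fun σ => mmp1000 σ = c)).card



def GoodStruct (L : List ℕ) : Prop :=
  (∀ i j : ℕ, i % 2 = 1 → i < j → j < L.length → L.getD j 0 < L.getD i 0) ∧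
  (∀ i : ℕ, i % 2 = 0 → i + 1 < L.length → L.getD i 0 < L.getD (i+1) 0)

open scoped Classical in
noncomputable def GoodSet (avail : List ℕ) : Finset (List ℕ) :=
  avail.permutations.toFinset.filter (fun L => GoodStruct L)

lemma mem_GoodSet {avail L : List ℕ} :
    L ∈ GoodSet avail ↔ L.Perm avail ∧ GoodStruct L := by
  classical
  simp [GoodSet, List.mem_permutations]

-- shifting lemma
lemma goodStruct_cons_cons {x a : ℕ} {L : List ℕ} :
    GoodStruct (x :: a :: L) ↔
      (x < a ∧ (∀ b ∈ L, b < a) ∧ GoodStruct L) := by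
  constructor
  · rintro ⟨h1, h2⟩
    refine ⟨?_, ?_, ?_, ?_⟩
    · have := h2 0 rfl (by simp only [List.length_cons] at *; omega)
      simpa using this
    · intro b hb
      obtain ⟨k, hk, rfl⟩ := List.getElem_of_mem hb
      have := h1 1 (k+2) rfl (by omega) (by simp only [List.length_cons] at *; omega)
      simp only [List.getD_cons_succ, List.getD_cons_zero] at this
      rwa [List.getD_eq_getElem _ _ hk] at this
    · intro i j hi hij hj
      have := h1 (i+2) (j+2) (by omega) (by omega) (by simp only [List.length_cons] at *; omega)
      simpa using this
    · intro i hi h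
      have := h2 (i+2) (by omega) (by simp only [List.length_cons] at *; omega)
      simpa using this
  · rintro ⟨hxa, hdom, h1, h2⟩
    constructor
    · intro i j hi hij hj
      match i, j with
      | 0, _ => omega
      | 1, (j+2) =>
        simp only [List.getD_cons_succ, List.getD_cons_zero]
        have hjlen : j < L.length := by simp only [List.length_cons] at hj; omega
        rw [List.getD_eq_getElem _ _ hjlen]
        exact hdom _ (List.getElem_mem hjlen)
      | (i+2), (j+2) =>
        simp only [List.getD_cons_succ]
        exact h1 i j (by omega) (by omega) (by simp only [List.length_cons] at hj; omega)
    · intro i hi h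
      match i with
      | 0 => simpa using hxa
      | (i+2) =>
        simp only [List.getD_cons_succ]
        exact h2 i (by omega) (by simp only [List.length_cons] at h; omega)


lemma goodCard_base (avail : List ℕ) (_h : avail.Pairwise (· > ·)) (hl : avail.length = 1) :
    (GoodSet avail).card = 1 := by
  obtain ⟨a, rfl⟩ := List.length_eq_one_iff.mp hl
  have : GoodSet [a] = {[a]} := by
    ext L
    simp only [mem_GoodSet, List.perm_singleton, Finset.mem_singleton]
    constructor
    · rintro ⟨rfl, -⟩; rfl
    · rintro rfl
      refine ⟨rfl, ⟨?_, ?_⟩⟩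
      · intro i j _ hij hj; simp only [List.length_cons, List.length_nil] at hj; omega
      · intro i _ h; simp only [List.length_cons, List.length_nil] at h; omega
  rw [this]; simp [Nat.doubleFactorial]

lemma goodSet_step {a : ℕ} {rest : List ℕ} (hsort : (a :: rest).Pairwise (· > ·))
    (hlen : 2 ≤ rest.length) :
    GoodSet (a :: rest) =
      rest.toFinset.biUnion (fun x => (GoodSet (rest.erase x)).image (fun L => x :: a :: L)) := by
  classical
  have ha : ∀ b ∈ rest, b < a := fun b hb => (List.pairwise_cons.mp hsort).1 b hb
  have hnd : (a :: rest).Nodup := hsort.nodup -- Sorted (· > ·) nodup?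
  ext L
  simp only [Finset.mem_biUnion, Finset.mem_image, List.mem_toFinset]
  constructor
  · intro hL
    obtain ⟨hperm, hgs⟩ := mem_GoodSet.mp hL
    have hLlen : L.length = rest.length + 1 := by simpa using hperm.length_eq
    rcases L with _ | ⟨x, _ | ⟨b, L2⟩⟩
    · exfalso; simp only [List.length_nil] at hLlen; omega
    · exfalso; simp only [List.length_cons, List.length_nil] at hLlen; omega
    · have hLnd : (x :: b :: L2).Nodup := hperm.nodup_iff.mpr hnd
      rw [goodStruct_cons_cons] at hgs
      obtain ⟨hxb, hdom, hgs2⟩ := hgs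
      -- b = a
      have hba : b = a := by
        by_contra hne
        have hbmem : b ∈ a :: rest := hperm.subset (by simp)
        have hbr : b ∈ rest := by
          rcases List.mem_cons.mp hbmem with rfl | h
          · exact absurd rfl hne
          · assumption
        have hamem : a ∈ x :: b :: L2 := hperm.mem_iff.mpr (by simp)
        have : a = x ∨ a ∈ L2 := by
          rcases List.mem_cons.mp hamem with rfl | h
          · left; rfl
          · rcases List.mem_cons.mp h with h | h
            · exact absurd h.symm hne
            · right; assumption
        rcases this with hax | h
        · have h1 := ha b hbr; omega
        · have h1 := ha b hbr; have h2 := hdom a h; omega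
      subst hba
      have hperm2 : (x :: L2).Perm rest :=
        ((List.Perm.swap x b L2).trans hperm).cons_inv
      obtain ⟨hxr, hL2⟩ := List.cons_perm_iff_perm_erase.mp hperm2
      exact ⟨x, hxr, L2, mem_GoodSet.mpr ⟨hL2, hgs2⟩, rfl⟩
  · rintro ⟨x, hxr, L2, hL2, rfl⟩
    obtain ⟨hperm2, hgs2⟩ := mem_GoodSet.mp hL2
    refine mem_GoodSet.mpr ⟨?_, ?_⟩
    · have h1 : (x :: L2).Perm rest :=
        List.cons_perm_iff_perm_erase.mpr ⟨hxr, hperm2⟩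
      exact (List.Perm.swap a x L2).trans (h1.cons a)
    · rw [goodStruct_cons_cons]
      refine ⟨ha x hxr, ?_, hgs2⟩
      intro b hb
      exact ha b (List.mem_of_mem_erase (hperm2.subset hb))

lemma goodCard : ∀ (m : ℕ) (avail : List ℕ), avail.Pairwise (· > ·) →
    avail.length = 2*m+1 → (GoodSet avail).card = (2*m).doubleFactorial := by
  intro m
  induction m with
  | zero => intro avail h hl; simpa [Nat.doubleFactorial] using goodCard_base avail h (by omega)
  | succ m ih =>
    intro avail hsort hlen
    classical
    rcases avail with _ | ⟨a, rest⟩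
    · exfalso; simp at hlen
    · have hrlen : rest.length = 2*m+2 := by
        simp only [List.length_cons] at hlen; omega
      have hrs : rest.Pairwise (· > ·) := (List.pairwise_cons.mp hsort).2
      rw [goodSet_step hsort (by omega)]
      rw [Finset.card_biUnion]
      · have hterm : ∀ x ∈ rest.toFinset,
            ((GoodSet (rest.erase x)).image (fun L => x :: a :: L)).card
              = (2*m).doubleFactorial := by
          intro x hx
          rw [Finset.card_image_of_injective _ (fun u v huv => by simpa using huv)]
          refine ih (rest.erase x) ?_ ?_
          · exact List.Pairwise.sublist (rest.erase_sublist (a := x)) hrs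
          · rw [List.length_erase_of_mem (List.mem_toFinset.mp hx)]; omega
        rw [Finset.sum_congr rfl hterm, Finset.sum_const, smul_eq_mul,
          List.toFinset_card_of_nodup hrs.nodup, hrlen]
        have h2 : 2*(m+1) = 2*m+2 := by ring
        rw [h2, Nat.doubleFactorial_add_two]
      · intro x hx y hy hxy
        rw [Function.onFun, Finset.disjoint_left]
        intro L hLx hLy
        obtain ⟨_, _, hL1⟩ := Finset.mem_image.mp hLx
        obtain ⟨_, _, hL2⟩ := Finset.mem_image.mp hLy
        apply hxy
        rw [← hL1] at hL2
        exact (List.cons.injEq _ _ _ _ ▸ hL2).1.symm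

section Char
variable {n : ℕ}

variable {n : ℕ}

open scoped Classical in
noncomputable def Tset (σ : Equiv.Perm (Fin (2*n+1))) : Finset (Fin (2*n+1)) :=
  Finset.univ.filter (fun i => ∃ j, i < j ∧ σ i < σ j)

lemma mmp_eq_Tcard (σ : Equiv.Perm (Fin (2*n+1))) : mmp1000 σ = (Tset σ).card := by
  classical
  unfold mmp1000 Tset
  congr 1

open scoped Classical in
noncomputable def Eset (n : ℕ) : Finset (Fin (2*n+1)) :=
  Finset.univ.filter (fun i => (i : ℕ) % 2 = 0 ∧ (i : ℕ) < 2*n)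

lemma Eset_card : (Eset n).card = n := by
  classical
  have : Eset n = Finset.image (fun k : Fin n => (⟨2*(k:ℕ), by omega⟩ : Fin (2*n+1))) Finset.univ := by
    ext i
    simp only [Eset, Finset.mem_filter, Finset.mem_univ, true_and, Finset.mem_image]
    constructor
    · rintro ⟨h1, h2⟩
      exact ⟨⟨(i:ℕ)/2, by omega⟩, by apply Fin.ext; simp; omega⟩
    · rintro ⟨k, rfl⟩
      constructor
      · simp [Nat.mul_mod_right]
      · have := k.isLt
        simp only [Fin.val_mk]; omega
  rw [this, Finset.card_image_of_injective _ (fun u v huv => by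
    apply Fin.ext
    have : 2*(u:ℕ) = 2*(v:ℕ) := congrArg Fin.val huv
    omega)]
  simp

lemma Eset_subset_Tset {σ : Equiv.Perm (Fin (2*n+1))} (h : IsUpDown σ) :
    Eset n ⊆ Tset σ := by
  classical
  intro i hi
  simp only [Eset, Finset.mem_filter, Finset.mem_univ, true_and] at hi
  obtain ⟨heven, hlt⟩ := hi
  have hb : (i:ℕ) + 1 < 2*n+1 := by omega
  have := h i hb
  rw [if_pos heven] at this
  simp only [Tset, Finset.mem_filter, Finset.mem_univ, true_and]
  exact ⟨⟨(i:ℕ)+1, hb⟩, by simp [Fin.lt_def], this⟩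

lemma le_mmp {σ : Equiv.Perm (Fin (2*n+1))} (h : IsUpDown σ) : n ≤ mmp1000 σ := by
  rw [mmp_eq_Tcard]
  calc n = (Eset n).card := Eset_card.symm
    _ ≤ (Tset σ).card := Finset.card_le_card (Eset_subset_Tset h)

def Qprop (σ : Equiv.Perm (Fin (2*n+1))) : Prop :=
  (∀ i j : Fin (2*n+1), (i:ℕ) % 2 = 1 → i < j → σ j < σ i) ∧
  (∀ i : Fin (2*n+1), (i:ℕ) % 2 = 0 → ∀ h : (i:ℕ)+1 < 2*n+1, σ i < σ ⟨(i:ℕ)+1, h⟩)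

lemma isUpDown_of_Q {σ : Equiv.Perm (Fin (2*n+1))} (hq : Qprop σ) : IsUpDown σ := by
  intro i h
  by_cases hp : (i:ℕ) % 2 = 0
  · rw [if_pos hp]; exact hq.2 i hp h
  · rw [if_neg hp]
    exact hq.1 i ⟨(i:ℕ)+1, h⟩ (by omega) (by simp [Fin.lt_def])

lemma Tset_eq_of_Q {σ : Equiv.Perm (Fin (2*n+1))} (hq : Qprop σ) : Tset σ = Eset n := by
  classical
  apply Finset.Subset.antisymm
  · intro i hi
    simp only [Tset, Finset.mem_filter, Finset.mem_univ, true_and] at hi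
    obtain ⟨j, hij, hlt⟩ := hi
    simp only [Eset, Finset.mem_filter, Finset.mem_univ, true_and]
    constructor
    · by_contra hodd
      have : (i:ℕ) % 2 = 1 := by omega
      exact absurd hlt (by have := hq.1 i j this hij; omega)
    · by_contra hge
      have : (i:ℕ) = 2*n := by omega
      have hj := j.isLt
      rw [Fin.lt_def] at hij
      omega
  · exact Eset_subset_Tset (isUpDown_of_Q hq)

lemma char_Q {σ : Equiv.Perm (Fin (2*n+1))} :
    (IsUpDown σ ∧ mmp1000 σ = n) ↔ Qprop σ := by
  classical
  constructor
  · rintro ⟨hud, hm⟩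
    have hTE : Tset σ = Eset n := by
      refine (Finset.eq_of_subset_of_card_le (Eset_subset_Tset hud) ?_).symm
      rw [← mmp_eq_Tcard, hm, Eset_card]
    constructor
    · intro i j hodd hij
      have hiT : i ∉ Tset σ := by
        rw [hTE]
        simp only [Eset, Finset.mem_filter, Finset.mem_univ, true_and]
        omega
      simp only [Tset, Finset.mem_filter, Finset.mem_univ, true_and, not_exists] at hiT
      have h1 : ¬ (σ i < σ j) := fun hc => hiT j ⟨hij, hc⟩
      have h2 : σ i ≠ σ j := fun hc => absurd (σ.injective hc) (Fin.ne_of_lt hij)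
      omega
    · intro i hp h
      have := hud i h
      rwa [if_pos hp] at this
  · intro hq
    refine ⟨isUpDown_of_Q hq, ?_⟩
    rw [mmp_eq_Tcard, Tset_eq_of_Q hq, Eset_card]



def availList (n : ℕ) : List ℕ := (List.range (2*n+1)).reverse

lemma availList_sorted (n : ℕ) : (availList n).Pairwise (· > ·) := by
  rw [availList, List.pairwise_reverse]
  exact List.pairwise_lt_range

lemma availList_length (n : ℕ) : (availList n).length = 2*n+1 := by simp [availList]

lemma mem_availList {n k : ℕ} : k ∈ availList n ↔ k < 2*n+1 := by
  simp [availList]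

variable {n : ℕ}

lemma ofFn_perm_avail (σ : Equiv.Perm (Fin (2*n+1))) :
    (List.ofFn fun i => ((σ i : ℕ))).Perm (availList n) := by
  classical
  apply List.perm_of_nodup_nodup_toFinset_eq
  · exact List.nodup_ofFn.mpr (Fin.val_injective.comp σ.injective)
  · exact (List.nodup_reverse.mpr List.nodup_range)
  · ext k
    simp only [List.mem_toFinset, List.mem_ofFn, mem_availList]
    constructor
    · rintro ⟨i, rfl⟩; exact (σ i).isLt
    · intro hk; exact ⟨σ.symm ⟨k, hk⟩, by simp⟩

lemma getD_ofFn (σ : Equiv.Perm (Fin (2*n+1))) {i : ℕ} (h : i < 2*n+1) :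
    (List.ofFn fun k => ((σ k : ℕ))).getD i 0 = σ ⟨i, h⟩ := by
  rw [List.getD_eq_getElem _ _ (by simpa using h), List.getElem_ofFn]

lemma goodStruct_iff_Q (σ : Equiv.Perm (Fin (2*n+1))) :
    GoodStruct (List.ofFn fun i => ((σ i : ℕ))) ↔ Qprop σ := by
  constructor
  · rintro ⟨h1, h2⟩
    constructor
    · intro i j hodd hij
      have := h1 i j hodd (Fin.lt_def.mp hij) (by simpa using j.isLt)
      rw [getD_ofFn σ i.isLt, getD_ofFn σ j.isLt] at this
      simp only [Fin.eta] at this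
      exact Fin.lt_def.mpr this
    · intro i heven hb
      have := h2 i heven (by simpa using hb)
      rw [getD_ofFn σ i.isLt, getD_ofFn σ hb] at this
      simp only [Fin.eta] at this
      exact Fin.lt_def.mpr this
  · rintro ⟨h1, h2⟩
    constructor
    · intro i j hodd hij hj
      have hj' : j < 2*n+1 := by simpa using hj
      have hi' : i < 2*n+1 := by omega
      rw [getD_ofFn σ hi', getD_ofFn σ hj']
      exact Fin.lt_def.mp (h1 ⟨i, hi'⟩ ⟨j, hj'⟩ hodd (Fin.mk_lt_mk.mpr hij))
    · intro i heven hb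
      have hb' : i + 1 < 2*n+1 := by simpa using hb
      have hi' : i < 2*n+1 := by omega
      rw [getD_ofFn σ hi', getD_ofFn σ hb']
      exact Fin.lt_def.mp (h2 ⟨i, hi'⟩ heven hb')

open scoped Classical in
lemma card_Q_eq_goodCard :
    (Finset.univ.filter (fun σ : Equiv.Perm (Fin (2*n+1)) => Qprop σ)).card
      = (GoodSet (availList n)).card := by
  classical
  apply Finset.card_bij (fun σ _ => List.ofFn fun i => ((σ i : ℕ)))
  · intro σ hσ
    rw [Finset.mem_filter] at hσ
    exact mem_GoodSet.mpr ⟨ofFn_perm_avail σ, (goodStruct_iff_Q σ).mpr hσ.2⟩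
  · intro σ _ τ _ h
    have h3 := List.ofFn_inj.mp h
    ext i
    exact congrArg Fin.val (Fin.ext (congrFun h3 i) : σ i = τ i)
  · intro L hL
    obtain ⟨hperm, hgs⟩ := mem_GoodSet.mp hL
    have hlen : L.length = 2*n+1 := by
      rw [hperm.length_eq, availList_length]
    have hnd : L.Nodup := hperm.nodup_iff.mpr (List.nodup_reverse.mpr List.nodup_range)
    have hbound : ∀ i : ℕ, i < 2*n+1 → L.getD i 0 < 2*n+1 := by
      intro i hi
      have hmem : L.getD i 0 ∈ L := by
        rw [List.getD_eq_getElem _ _ (by omega)]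
        exact List.getElem_mem _
      exact mem_availList.mp (hperm.subset hmem)
    set g : Fin (2*n+1) → Fin (2*n+1) := fun i => ⟨L.getD i 0, hbound i i.isLt⟩ with hg
    have ginj : Function.Injective g := by
      intro i j hij
      have : L.getD i 0 = L.getD j 0 := congrArg Fin.val hij
      rw [List.getD_eq_getElem _ _ (by omega : (i:ℕ) < L.length),
        List.getD_eq_getElem _ _ (by omega : (j:ℕ) < L.length)] at this
      have := (List.Nodup.getElem_inj_iff hnd).mp this
      exact Fin.ext (by omega)
    have gbij : Function.Bijective g := Finite.injective_iff_bijective.mp ginj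
    refine ⟨Equiv.ofBijective g gbij, ?_, ?_⟩
    · rw [Finset.mem_filter]
      refine ⟨Finset.mem_univ _, ?_⟩
      rw [← goodStruct_iff_Q]
      have : (List.ofFn fun i => (((Equiv.ofBijective g gbij) i : ℕ))) = L := by
        apply List.ext_getElem (by simp [hlen])
        intro i h1 h2
        simp only [List.getElem_ofFn]
        show L.getD i 0 = L[i]
        exact List.getD_eq_getElem L 0 h2
      rwa [this]
    · apply List.ext_getElem (by simp [hlen])
      intro i h1 h2
      simp only [List.getElem_ofFn]
      show L.getD i 0 = L[i]
      exact List.getD_eq_getElem L 0 h2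

end Char

theorem stmt9 (n : ℕ) (hn : 1 ≤ n) :
    BcountEq n n = Nat.doubleFactorial (2 * n) ∧
    ∀ σ : Equiv.Perm (Fin (2 * n + 1)), IsUpDown σ → n ≤ mmp1000 σ := by
  classical
  constructor
  · have hset : (UDset (2 * n + 1)).filter (fun σ => mmp1000 σ = n)
        = Finset.univ.filter (fun σ : Equiv.Perm (Fin (2*n+1)) => Qprop σ) := by
      ext σ
      simp only [Finset.mem_filter, UDset, Finset.mem_univ, true_and]
      rw [← char_Q]
    rw [BcountEq]
    rw [show ((UDset (2 * n + 1)).filter (fun σ => mmp1000 σ = n)).card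
        = (Finset.univ.filter (fun σ : Equiv.Perm (Fin (2*n+1)) => Qprop σ)).card
      from by rw [hset]]
    rw [card_Q_eq_goodCard, goodCard n (availList n) (availList_sorted n) (availList_length n)]
  · exact fun σ h => le_mmp h
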